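/- Let m ≥ 1, b ≥ 1, ρ̄ > 0 be reals and define a_k = ρ̄ − (1/m)∑_{j=1}^{k−1} a_j for 1 ≤ k ≤ b. Suppose d_1, …, d_b are nonnegative reals satisfying d_k > ρ̄ − (1/m)∑_{j=1}^{k−1} d_j for all 1 ≤ k ≤ b. Then for every k with 0 ≤ k ≤ b, ∑_{j=1}^{k} d_j ≥ ∑_{j=1}^{k} a_j. -/

import Mathlib

theorem pebbles_prefix_domination (m : ℝ) (hm : 1 ≤ m) (b : ℕ) (hb : 1 ≤ b)
    (ρ : ℝ) (hρ : 0 < ρ)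
    (a : ℕ → ℝ)
    (ha : ∀ k, 1 ≤ k → k ≤ b →
      a k = ρ - (1 / m) * ∑ j ∈ Finset.Icc 1 (k - 1), a j)
    (d : ℕ → ℝ) (hd0 : ∀ k, 0 ≤ d k)
    (hd : ∀ k, 1 ≤ k → k ≤ b →
      d k > ρ - (1 / m) * ∑ j ∈ Finset.Icc 1 (k - 1), d j) :
    ∀ k, k ≤ b → ∑ j ∈ Finset.Icc 1 k, d j ≥ ∑ j ∈ Finset.Icc 1 k, a j := by
  intro k
  induction k with
  | zero => intro _; simp
  | succ n ih =>
    intro hkb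
    have hn : n ≤ b := Nat.le_of_succ_le hkb
    have IH := ih hn
    have hsum : ∀ f : ℕ → ℝ, ∑ j ∈ Finset.Icc 1 (n + 1), f j
        = (∑ j ∈ Finset.Icc 1 n, f j) + f (n + 1) := by
      intro f
      exact Finset.sum_Icc_succ_top (Nat.succ_le_succ (Nat.zero_le n)) f
    rw [hsum d, hsum a]
    have had := ha (n + 1) (Nat.le_add_left 1 n) hkb
    have hdd := hd (n + 1) (Nat.le_add_left 1 n) hkb
    simp only [Nat.add_sub_cancel] at had hdd
    have hm0 : (0 : ℝ) < m := lt_of_lt_of_le one_pos hm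
    have h1m : 0 ≤ 1 - 1 / m := by
      have : 1 / m ≤ 1 := by
        rw [div_le_one hm0]; exact hm
      linarith
    nlinarith [mul_le_mul_of_nonneg_left IH h1m]
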